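/- For every vector c ∈ ℂ^N there exists x̃ ∈ S such that Re(x̃^H c) = −(1/N) Σ_{n=0}^{N−1} |Σ_{k=0}^{N−1} c_k ω^{kn}| ≤ 0. (Existence of a constant-modulus vector making the linear term maximally negative.) -/

import Mathlib

open Matrix

/-- For every `c ∈ ℂ^N` there is a constant-modulus vector `x̃ ∈ S` with
`Re(x̃ᴴ c) = -(1/N) ∑_n |∑_k c_k ω^{kn}| ≤ 0`. -/
theorem stmt11 (N : ℕ) (hN : 0 < N) (ω : ℂ)
    (hω : ω = Complex.exp (2 * (Real.pi : ℂ) * Complex.I / N))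
    (S : Set (Fin N → ℂ))
    (hS : S = {x : Fin N → ℂ |
      ∀ n : Fin N, ‖∑ k : Fin N, x k * ω ^ ((k : ℕ) * (n : ℕ))‖ = 1})
    (c : Fin N → ℂ) :
    ∃ x ∈ S,
      (star x ⬝ᵥ c).re =
        -(1 / (N : ℝ)) * ∑ n : Fin N,
          ‖∑ k : Fin N, c k * ω ^ ((k : ℕ) * (n : ℕ))‖ ∧
      (star x ⬝ᵥ c).re ≤ 0 := by
  have hprim : IsPrimitiveRoot ω N := hω ▸ Complex.isPrimitiveRoot_exp N hN.ne'
  have hω1 : ω ^ N = 1 := hprim.pow_eq_one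
  have hωne : ω ≠ 0 := by
    rw [hω]; exact Complex.exp_ne_zero _
  have habs : ‖ω‖ = 1 := by
    rw [hω, Complex.norm_exp]
    have : (2 * (Real.pi : ℂ) * Complex.I / N).re = 0 := by
      simp [Complex.div_re]
    rw [this, Real.exp_zero]
  have hconj : (starRingEnd ℂ) ω = ω⁻¹ := by
    rw [Complex.inv_eq_conj]; rw [habs]
  -- DFT of c
  set ch : Fin N → ℂ := fun n => ∑ k : Fin N, c k * ω ^ ((k : ℕ) * (n : ℕ)) with hch
  -- unit-modulus targets
  set u : Fin N → ℂ := fun n => if ch n = 0 then 1 else - ch n / ((‖ch n‖ : ℝ) : ℂ) with hu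
  have hu_abs : ∀ n, ‖u n‖ = 1 := by
    intro n
    by_cases h : ch n = 0
    · simp [hu, h]
    · simp only [hu, if_neg h]
      rw [norm_div, norm_neg]
      simp [h]
  have hu_mul : ∀ n, (starRingEnd ℂ) (u n) * ch n = -((‖ch n‖ : ℝ) : ℂ) := by
    intro n
    by_cases h : ch n = 0
    · simp [hu, h]
    · have habsne : ((‖ch n‖ : ℝ) : ℂ) ≠ 0 := by
        simp [h]
      simp only [hu, if_neg h, map_div₀, map_neg, Complex.conj_ofReal]
      rw [div_mul_eq_mul_div, neg_mul, mul_comm, Complex.mul_conj]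
      rw [← Complex.sq_norm]
      push_cast
      field_simp
  -- orthogonality
  have horth : ∀ n m : Fin N,
      ∑ k : Fin N, ω ^ ((k : ℕ) * (n : ℕ)) * ω⁻¹ ^ ((k : ℕ) * (m : ℕ))
        = if n = m then (N : ℂ) else 0 := by
    intro n m
    set ζ : ℂ := ω ^ (n : ℕ) * (ω ^ (m : ℕ))⁻¹ with hζ
    have hterm : ∀ k : Fin N,
        ω ^ ((k : ℕ) * (n : ℕ)) * ω⁻¹ ^ ((k : ℕ) * (m : ℕ)) = ζ ^ (k : ℕ) := by
      intro k
      have : ζ ^ (k : ℕ) = ω ^ ((k : ℕ) * (n : ℕ)) * ω⁻¹ ^ ((k : ℕ) * (m : ℕ)) := by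
        rw [hζ, mul_pow]
        congr 1
        · rw [← pow_mul, mul_comm (n : ℕ) (k : ℕ)]
        · rw [← inv_pow, ← pow_mul, mul_comm (m : ℕ) (k : ℕ)]
      exact this.symm
    rw [Finset.sum_congr rfl (fun k _ => hterm k)]
    by_cases h : n = m
    · subst h
      have : ζ = 1 := by
        rw [hζ, mul_inv_cancel₀ (pow_ne_zero _ hωne)]
      simp [this]
    · have hζN : ζ ^ N = 1 := by
        rw [hζ, mul_pow, inv_pow, ← pow_mul, ← pow_mul, mul_comm (n : ℕ) N,
          mul_comm (m : ℕ) N, pow_mul, pow_mul, hω1, one_pow, one_pow, inv_one, mul_one]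
      have hζ1 : ζ ≠ 1 := by
        intro hc
        apply h
        have : ω ^ (n : ℕ) = ω ^ (m : ℕ) := by
          rw [hζ, mul_inv_eq_one₀ (pow_ne_zero _ hωne)] at hc
          exact hc
        exact Fin.ext (hprim.pow_inj n.isLt m.isLt this)
      rw [Fin.sum_univ_eq_sum_range (fun k => ζ ^ k), geom_sum_eq hζ1, hζN]
      simp [h]
  -- the vector
  set x : Fin N → ℂ := fun k => (1 / (N : ℂ)) * ∑ m : Fin N, u m * ω⁻¹ ^ ((k : ℕ) * (m : ℕ)) with hx
  have hNC : (N : ℂ) ≠ 0 := Nat.cast_ne_zero.mpr hN.ne'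
  have hdft : ∀ n : Fin N, ∑ k : Fin N, x k * ω ^ ((k : ℕ) * (n : ℕ)) = u n := by
    intro n
    have hswap : ∑ k : Fin N, x k * ω ^ ((k : ℕ) * (n : ℕ))
        = ∑ m : Fin N, (1 / (N : ℂ)) *
            (u m * ∑ k : Fin N, ω ^ ((k : ℕ) * (n : ℕ)) * ω⁻¹ ^ ((k : ℕ) * (m : ℕ))) := by
      simp only [hx, Finset.mul_sum, Finset.sum_mul]
      rw [Finset.sum_comm]
      refine Finset.sum_congr rfl fun m _ => Finset.sum_congr rfl fun k _ => by ring
    rw [hswap]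
    simp only [horth, mul_ite, mul_zero, Finset.sum_ite_eq, Finset.mem_univ, if_true]
    field_simp
  have hre : (star x ⬝ᵥ c).re =
      -(1 / (N : ℝ)) * ∑ n : Fin N, ‖ch n‖ := by
    have hconjx : ∀ k : Fin N, (starRingEnd ℂ) (x k)
        = (1 / (N : ℂ)) * ∑ m : Fin N, (starRingEnd ℂ) (u m) * ω ^ ((k : ℕ) * (m : ℕ)) := by
      intro k
      simp only [hx, _root_.map_mul, map_sum, map_pow, map_inv₀, hconj, inv_inv,
        map_div₀, _root_.map_one, map_natCast]
    have key : star x ⬝ᵥ c = ((-(1 / (N : ℝ)) * ∑ n : Fin N, ‖ch n‖ : ℝ) : ℂ) := by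
      calc star x ⬝ᵥ c = ∑ k : Fin N, (starRingEnd ℂ) (x k) * c k := by
            simp [dotProduct, Pi.star_apply, RCLike.star_def]
        _ = ∑ m : Fin N, (1 / (N : ℂ)) * ((starRingEnd ℂ) (u m) * ch m) := by
            rw [Finset.sum_congr rfl (fun k _ => by rw [hconjx k])]
            simp only [hch, Finset.mul_sum, Finset.sum_mul]
            rw [Finset.sum_comm]
            refine Finset.sum_congr rfl fun m _ => Finset.sum_congr rfl fun k _ => by ring
        _ = ∑ m : Fin N, (1 / (N : ℂ)) * -((‖ch m‖ : ℝ) : ℂ) := by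
            refine Finset.sum_congr rfl fun m _ => by rw [hu_mul m]
        _ = ((-(1 / (N : ℝ)) * ∑ n : Fin N, ‖ch n‖ : ℝ) : ℂ) := by
            push_cast
            rw [← Finset.mul_sum]
            rw [Finset.sum_neg_distrib]
            ring
    rw [key, Complex.ofReal_re]
  refine ⟨x, ?_, hre, ?_⟩
  · rw [hS]
    intro n
    rw [hdft n, hu_abs n]
  · rw [hre]
    apply mul_nonpos_of_nonpos_of_nonneg
    · have : (0 : ℝ) ≤ 1 / (N : ℝ) := by positivity
      linarith
    · exact Finset.sum_nonneg fun n _ => norm_nonneg _
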